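/- Let {X_n} satisfy AIM(x_n) with separation sequence q_n and mixing coefficients α_n, suppose n·F̄(x_n) → τ > 0 as n → ∞, and let (p_n) be a sequence of positive integers with p_n = o(n), n·α_n = o(p_n) and q_n = o(p_n). Then P(M_n ≤ x_n) − ∏_{i=1}^{r_n} P(M(A_i) ≤ x_n) → 0 as n → ∞, where r_n = ⌊n/(p_n+q_n)⌋ and A_i = {(i−1)(p_n+q_n)+1, …, i·p_n + (i−1)·q_n} for 1 ≤ i ≤ r_n. -/

import Mathlib

set_option linter.unusedSectionVars false
set_option linter.unusedVariables false


open MeasureTheory Filter Finset Asymptotics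

/-- Probability of an event as a real number. -/
noncomputable def pr {Ω : Type*} [MeasurableSpace Ω] (P : Measure Ω) (A : Set Ω) : ℝ :=
  (P A).toReal

/-- The event that `X i ≤ x` for every index `i` in the set `S`;
this is the event `{M(S) ≤ x}` where `M(S) = max {X i : i ∈ S}`. -/
def allLe {Ω : Type*} (X : ℕ → Ω → ℝ) (S : Set ℕ) (x : ℝ) : Set Ω :=
  {ω | ∀ i ∈ S, X i ω ≤ x}

/-- `α` is a sequence of AIM mixing coefficients for `X` relative to thresholds `xs`
with separation sequence `q`: for any two intervals `I₁ = [a,b]`, `I₂ = [b+qₙ+1, c]`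
contained in `{1,…,n}`, separated by `qₙ`, each of cardinality at least `qₙ`,
the maximum-based discrepancy is bounded by `α n`. -/
def AIMBound {Ω : Type*} [MeasurableSpace Ω] (P : Measure Ω) (X : ℕ → Ω → ℝ)
    (xs : ℕ → ℝ) (q : ℕ → ℕ) (α : ℕ → ℝ) : Prop :=
  ∀ n a b c : ℕ, 1 ≤ a → a ≤ b → b + q n + 1 ≤ c → c ≤ n →
    q n ≤ b + 1 - a → q n ≤ c - (b + q n) →
    |pr P (allLe X (Set.Icc a b ∪ Set.Icc (b + q n + 1) c) (xs n)) -
      pr P (allLe X (Set.Icc a b) (xs n)) *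
        pr P (allLe X (Set.Icc (b + q n + 1) c) (xs n))| ≤ α n

section helpers
variable {Ω : Type*} [MeasurableSpace Ω] (P : Measure Ω) [IsProbabilityMeasure P]
  (X : ℕ → Ω → ℝ)

lemma pr_nonneg (A : Set Ω) : 0 ≤ pr P A := ENNReal.toReal_nonneg

lemma pr_le_one (A : Set Ω) : pr P A ≤ 1 := by
  have := prob_le_one (μ := P) (s := A)
  simpa [pr] using ENNReal.toReal_mono ENNReal.one_ne_top this

lemma pr_mono {A B : Set Ω} (h : A ⊆ B) : pr P A ≤ pr P B :=
  ENNReal.toReal_mono (measure_ne_top P B) (measure_mono h)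

lemma measurableSet_allLe (hmeas : ∀ i, Measurable (X i)) (S : Set ℕ) (x : ℝ) :
    MeasurableSet (allLe X S x) := by
  have : allLe X S x = ⋂ i ∈ S, X i ⁻¹' Set.Iic x := by
    ext ω; simp [allLe, Set.mem_iInter]
  rw [this]
  exact MeasurableSet.biInter (S.to_countable) fun i _ => (hmeas i) measurableSet_Iic

lemma pr_gt (hmeas : ∀ i, Measurable (X i)) (i : ℕ) (x : ℝ) :
    pr P {ω | x < X i ω} = 1 - pr P {ω | X i ω ≤ x} := by
  have hA : MeasurableSet {ω | X i ω ≤ x} := (hmeas i) measurableSet_Iic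
  have h1 : {ω | x < X i ω} = {ω | X i ω ≤ x}ᶜ := by
    ext ω; simp [not_le]
  rw [h1, pr, prob_compl_eq_one_sub hA, pr]
  rw [ENNReal.toReal_sub_of_le (prob_le_one) ENNReal.one_ne_top]
  simp

lemma allLe_antitone {S T : Set ℕ} (h : S ⊆ T) (x : ℝ) : allLe X T x ⊆ allLe X S x :=
  fun ω hω i hi => hω i (h hi)

lemma pr_allLe_le_add (F : ℝ → ℝ) (hmeas : ∀ i, Measurable (X i))
    {x : ℝ} (hFx : ∀ i, 1 ≤ i → pr P {ω | X i ω ≤ x} = F x)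
    {S T : Set ℕ} (hST : S ⊆ T) (D : Finset ℕ) (hD : T \ S ⊆ ↑D) (hD1 : ∀ i ∈ D, 1 ≤ i) :
    pr P (allLe X S x) ≤ pr P (allLe X T x) + D.card * (1 - F x) := by
  have hsub : allLe X S x ⊆ allLe X T x ∪ ⋃ i ∈ D, {ω | x < X i ω} := by
    intro ω hω
    by_cases hT : ω ∈ allLe X T x
    · exact Or.inl hT
    · right
      simp only [allLe, Set.mem_setOf_eq, not_forall] at hT
      obtain ⟨i, hiT, hix⟩ := hT
      have hiS : i ∉ S := fun h => hix (hω i h)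
      refine Set.mem_biUnion (hD ⟨hiT, hiS⟩) ?_
      exact lt_of_not_ge hix
  have h1 : P (allLe X S x) ≤ P (allLe X T x) + ∑ i ∈ D, P {ω | x < X i ω} :=
    le_trans (measure_mono hsub)
      (le_trans (measure_union_le _ _) (by gcongr; exact measure_biUnion_finset_le _ _))
  have h2 : pr P (allLe X S x) ≤ (P (allLe X T x) + ∑ i ∈ D, P {ω | x < X i ω}).toReal := by
    refine ENNReal.toReal_mono ?_ h1
    exact ENNReal.add_ne_top.2 ⟨measure_ne_top _ _,
      (ENNReal.sum_lt_top.2 fun i _ => measure_lt_top P _).ne⟩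
  calc pr P (allLe X S x) ≤ (P (allLe X T x) + ∑ i ∈ D, P {ω | x < X i ω}).toReal := h2
    _ = pr P (allLe X T x) + ∑ i ∈ D, pr P {ω | x < X i ω} := by
        rw [ENNReal.toReal_add (measure_ne_top _ _), ENNReal.toReal_sum]
        · rfl
        · exact fun i _ => measure_ne_top _ _
        · exact (ENNReal.sum_lt_top.2 fun i _ => measure_lt_top P _).ne
    _ = pr P (allLe X T x) + D.card * (1 - F x) := by
        congr 1
        rw [Finset.sum_congr rfl fun i hi => by rw [pr_gt P X hmeas i x, hFx i (hD1 i hi)]]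
        rw [Finset.sum_const, nsmul_eq_mul]

end helpers

lemma keybound {Ω : Type*} [MeasurableSpace Ω] (P : Measure Ω) [IsProbabilityMeasure P]
    (X : ℕ → Ω → ℝ) (F : ℝ → ℝ) (xs : ℕ → ℝ) (q : ℕ → ℕ) (α : ℕ → ℝ) (p : ℕ → ℕ)
    (hmeas : ∀ i, Measurable (X i))
    (hF : ∀ i, 1 ≤ i → ∀ t : ℝ, pr P {ω | X i ω ≤ t} = F t)
    (hbd : AIMBound P X xs q α) (n : ℕ)
    (hq1 : 1 ≤ q n) (hp1 : 1 ≤ p n) (hqple : q n ≤ p n) (hn : p n + q n ≤ n) :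
    |pr P (allLe X (Set.Icc 1 n) (xs n)) -
      ∏ i ∈ Finset.Icc 1 (n / (p n + q n)),
        pr P (allLe X
          (Set.Icc ((i - 1) * (p n + q n) + 1) (i * p n + (i - 1) * q n)) (xs n))|
    ≤ ((p n + 2 * q n : ℕ) : ℝ) * (1 - F (xs n)) +
      ((n / (p n + q n) : ℕ) : ℝ) * (|α n| + (q n : ℝ) * (1 - F (xs n))) := by
  set x := xs n with hx
  set pp := p n with hpp
  set qq := q n with hqq
  set s := pp + qq with hs
  set r := n / s with hr
  set Fb := 1 - F x with hFb
  have hFx : ∀ i, 1 ≤ i → pr P {ω | X i ω ≤ x} = F x := fun i hi => hF i hi x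
  have hFb0 : 0 ≤ Fb := by
    have h1 : F x = pr P {ω | X 1 ω ≤ x} := (hFx 1 le_rfl).symm
    have := pr_le_one P {ω | X 1 ω ≤ x}
    rw [hFb]; linarith [h1 ▸ this]
  have hs0 : 0 < s := by omega
  have hr1 : 1 ≤ r := (Nat.one_le_div_iff hs0).2 hn
  have hrs : r * s ≤ n := Nat.div_mul_le_self n s
  -- block probabilities
  set a : ℕ → ℝ := fun i =>
    pr P (allLe X (Set.Icc ((i - 1) * s + 1) (i * pp + (i - 1) * qq)) x) with ha
  set B : ℕ → ℝ := fun j => pr P (allLe X (Set.Icc 1 (j * s - qq)) x) with hB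
  have ha01 : ∀ i, 0 ≤ a i ∧ a i ≤ 1 := fun i => ⟨pr_nonneg P _, pr_le_one P _⟩
  -- telescoping induction
  have key : ∀ j, 1 ≤ j → j ≤ r → |B j - ∏ i ∈ Finset.Icc 1 j, a i|
      ≤ ((j : ℝ) - 1) * (|α n| + (qq : ℝ) * Fb) := by
    intro j hj
    induction j, hj using Nat.le_induction with
    | base =>
      intro _
      rw [Finset.Icc_self, Finset.prod_singleton]
      simp only [hB, ha]
      have e3 : 1 * s - qq = 1 * pp + (1 - 1) * qq := by omega
      have e1 : (1:ℕ) = (1 - 1) * s + 1 := by norm_num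
      rw [e3, e1]
      norm_num
    | succ j hj ih =>
      intro hjr
      have hjr' : j ≤ r := by omega
      have IH := ih hjr'
      obtain ⟨A, hA⟩ : ∃ A, j * s = A := ⟨_, rfl⟩
      have hsA : s ≤ A := by
        rw [← hA]
        calc s = 1 * s := (one_mul s).symm
          _ ≤ j * s := Nat.mul_le_mul_right s hj
      have hAn : A + s ≤ n := by
        have h1 : (j + 1) * s = A + s := by rw [← hA]; ring
        have h2 : (j + 1) * s ≤ r * s := Nat.mul_le_mul_right s hjr
        omega
      -- AIM application
      have haim := hbd n 1 (A - qq) (A + s - qq) le_rfl (by omega) (by omega) (by omega)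
        (by omega) (by omega)
      rw [← hqq, ← hx] at haim
      rw [show (A - qq) + qq + 1 = A + 1 from by omega] at haim
      -- identify with B j, B (j+1), a (j+1)
      have hBj : B j = pr P (allLe X (Set.Icc 1 (A - qq)) x) := by
        simp only [hB]; rw [hA]
      have hBj1 : B (j + 1) = pr P (allLe X (Set.Icc 1 (A + s - qq)) x) := by
        simp only [hB]
        rw [show (j + 1) * s = A + s from by rw [← hA]; ring]
      have haj1 : a (j + 1) = pr P (allLe X (Set.Icc (A + 1) (A + s - qq)) x) := by
        simp only [ha, Nat.add_sub_cancel]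
        rw [show j * s + 1 = A + 1 from by rw [hA],
          show (j + 1) * pp + j * qq = A + s - qq from by rw [← hA, hs]; ring_nf; omega]
      have haim' : |pr P (allLe X (Set.Icc 1 (A - qq) ∪ Set.Icc (A + 1) (A + s - qq)) x) -
          B j * a (j + 1)| ≤ α n := by
        rw [hBj, haj1]; exact haim
      -- gap bound
      have hsubU : (Set.Icc 1 (A - qq) ∪ Set.Icc (A + 1) (A + s - qq) : Set ℕ)
          ⊆ Set.Icc 1 (A + s - qq) := by
        intro i hi
        simp only [Set.mem_union, Set.mem_Icc] at hi ⊢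
        omega
      have hgap1 : B (j + 1) ≤
          pr P (allLe X (Set.Icc 1 (A - qq) ∪ Set.Icc (A + 1) (A + s - qq)) x) := by
        rw [hBj1]
        exact pr_mono P (allLe_antitone X hsubU x)
      have hgap2 : pr P (allLe X (Set.Icc 1 (A - qq) ∪ Set.Icc (A + 1) (A + s - qq)) x)
          ≤ B (j + 1) + (qq : ℝ) * Fb := by
        have hcard : (Finset.Icc (A - qq + 1) A).card = qq := by
          rw [Nat.card_Icc]; omega
        have := pr_allLe_le_add P X F hmeas hFx hsubU (Finset.Icc (A - qq + 1) A)
          (by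
            intro i hi
            simp only [Set.mem_diff, Set.mem_union, Set.mem_Icc, Finset.coe_Icc] at hi ⊢
            omega)
          (by intro i hi; simp only [Finset.mem_Icc] at hi; omega)
        rw [hcard] at this
        rw [hBj1]
        exact this
      have hstep : |B (j + 1) - B j * a (j + 1)| ≤ |α n| + (qq : ℝ) * Fb := by
        have h1 : |B (j + 1) -
            pr P (allLe X (Set.Icc 1 (A - qq) ∪ Set.Icc (A + 1) (A + s - qq)) x)|
            ≤ (qq : ℝ) * Fb := by
          rw [abs_le]
          constructor
          · linarith
          · linarith
        calc |B (j + 1) - B j * a (j + 1)|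
            ≤ |B (j + 1) -
                pr P (allLe X (Set.Icc 1 (A - qq) ∪ Set.Icc (A + 1) (A + s - qq)) x)| +
              |pr P (allLe X (Set.Icc 1 (A - qq) ∪ Set.Icc (A + 1) (A + s - qq)) x) -
                B j * a (j + 1)| := abs_sub_le _ _ _
          _ ≤ (qq : ℝ) * Fb + α n := add_le_add h1 haim'
          _ ≤ |α n| + (qq : ℝ) * Fb := by
              have := le_abs_self (α n); linarith
      -- combine with product
      have hprod : ∏ i ∈ Finset.Icc 1 (j + 1), a i = (∏ i ∈ Finset.Icc 1 j, a i) * a (j + 1) :=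
        Finset.prod_Icc_succ_top (by omega) a
      have habs : |B j * a (j + 1) - (∏ i ∈ Finset.Icc 1 j, a i) * a (j + 1)|
          ≤ |B j - ∏ i ∈ Finset.Icc 1 j, a i| := by
        rw [← sub_mul, abs_mul]
        have := (ha01 (j + 1)).1
        have := (ha01 (j + 1)).2
        have h0 : |a (j + 1)| ≤ 1 := by rw [abs_of_nonneg]; assumption; assumption
        nlinarith [abs_nonneg (B j - ∏ i ∈ Finset.Icc 1 j, a i)]
      calc |B (j + 1) - ∏ i ∈ Finset.Icc 1 (j + 1), a i|
          ≤ |B (j + 1) - B j * a (j + 1)| +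
            |B j * a (j + 1) - ∏ i ∈ Finset.Icc 1 (j + 1), a i| := abs_sub_le _ _ _
        _ ≤ (|α n| + (qq : ℝ) * Fb) + ((j : ℝ) - 1) * (|α n| + (qq : ℝ) * Fb) := by
            refine add_le_add hstep ?_
            rw [hprod]
            exact le_trans habs IH
        _ = (((j + 1 : ℕ) : ℝ) - 1) * (|α n| + (qq : ℝ) * Fb) := by push_cast; ring
  -- final assembly
  have hkey := key r hr1 le_rfl
  obtain ⟨R, hR⟩ : ∃ R, r * s = R := ⟨_, rfl⟩
  have hR1 : s ≤ R := by
    rw [← hR]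
    calc s = 1 * s := (one_mul s).symm
      _ ≤ r * s := Nat.mul_le_mul_right s hr1
  have hRn : R ≤ n := hR ▸ hrs
  have hnRs : n < R + s := by
    have hR' : R = s * (n / s) := by rw [← hR, hr]; exact Nat.mul_comm _ _
    have hnr := Nat.div_add_mod n s
    have hmod : n % s < s := Nat.mod_lt n hs0
    omega
  have hBr : B r = pr P (allLe X (Set.Icc 1 (R - qq)) x) := by
    simp only [hB]; rw [hR]
  have hsub2 : (Set.Icc 1 (R - qq) : Set ℕ) ⊆ Set.Icc 1 n := by
    intro i hi; simp only [Set.mem_Icc] at hi ⊢; omega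
  have h1 : pr P (allLe X (Set.Icc 1 n) x) ≤ B r := by
    rw [hBr]; exact pr_mono P (allLe_antitone X hsub2 x)
  have hcard2 : ((Finset.Icc (R - qq + 1) n).card : ℝ) ≤ ((pp + 2 * qq : ℕ) : ℝ) := by
    have : (Finset.Icc (R - qq + 1) n).card ≤ pp + 2 * qq := by
      rw [Nat.card_Icc]; omega
    exact_mod_cast this
  have h2 : B r ≤ pr P (allLe X (Set.Icc 1 n) x) +
      ((pp + 2 * qq : ℕ) : ℝ) * Fb := by
    have := pr_allLe_le_add P X F hmeas hFx hsub2 (Finset.Icc (R - qq + 1) n)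
      (by
        intro i hi
        simp only [Set.mem_diff, Set.mem_Icc, Finset.coe_Icc] at hi ⊢
        omega)
      (by intro i hi; simp only [Finset.mem_Icc] at hi; omega)
    rw [hBr]
    refine le_trans this (add_le_add le_rfl ?_)
    exact mul_le_mul_of_nonneg_right hcard2 hFb0
  have hfirst : |pr P (allLe X (Set.Icc 1 n) x) - B r| ≤ ((pp + 2 * qq : ℕ) : ℝ) * Fb := by
    rw [abs_le]; constructor <;> linarith
  have hfinal : |pr P (allLe X (Set.Icc 1 n) x) - ∏ i ∈ Finset.Icc 1 r, a i|
      ≤ ((pp + 2 * qq : ℕ) : ℝ) * Fb + ((r : ℕ) : ℝ) * (|α n| + (qq : ℝ) * Fb) := by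
    have hnonneg : 0 ≤ |α n| + (qq : ℝ) * Fb := by
      have := abs_nonneg (α n)
      have : (0:ℝ) ≤ (qq : ℝ) * Fb := mul_nonneg (by positivity) hFb0
      positivity
    calc |pr P (allLe X (Set.Icc 1 n) x) - ∏ i ∈ Finset.Icc 1 r, a i|
        ≤ |pr P (allLe X (Set.Icc 1 n) x) - B r| + |B r - ∏ i ∈ Finset.Icc 1 r, a i| :=
          abs_sub_le _ _ _
      _ ≤ ((pp + 2 * qq : ℕ) : ℝ) * Fb + ((r : ℝ) - 1) * (|α n| + (qq : ℝ) * Fb) :=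
          add_le_add hfirst hkey
      _ ≤ ((pp + 2 * qq : ℕ) : ℝ) * Fb + ((r : ℕ) : ℝ) * (|α n| + (qq : ℝ) * Fb) := by
          have : ((r : ℝ) - 1) ≤ (r : ℝ) := by linarith
          nlinarith
  simpa only [ha] using hfinal

set_option maxHeartbeats 1000000

/-- Lemma lemOB: under AIM(xₙ) with `n·F̄(xₙ) → τ > 0` and a block-length
sequence `pₙ` with `pₙ = o(n)`, `n·αₙ = o(pₙ)`, `qₙ = o(pₙ)`, the probability
`P(Mₙ ≤ xₙ)` is asymptotically the product of the probabilities of the big-block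
maxima `M(Aᵢ)`, `Aᵢ = {(i−1)(pₙ+qₙ)+1, …, i·pₙ+(i−1)·qₙ}`, `1 ≤ i ≤ rₙ = ⌊n/(pₙ+qₙ)⌋`. -/
theorem stmt1 {Ω : Type*} [MeasurableSpace Ω] (P : Measure Ω) [IsProbabilityMeasure P]
    (X : ℕ → Ω → ℝ) (F : ℝ → ℝ) (xs : ℕ → ℝ) (q : ℕ → ℕ) (α : ℕ → ℝ) (p : ℕ → ℕ)
    (τ : ℝ) (hτ : 0 < τ)
    (hmeas : ∀ i, Measurable (X i))
    (hF : ∀ i, 1 ≤ i → ∀ t : ℝ, pr P {ω | X i ω ≤ t} = F t)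
    (hqpos : ∀ m, 1 ≤ q m)
    (hq : (fun n : ℕ => (q n : ℝ)) =o[atTop] (fun n : ℕ => (n : ℝ)))
    (hα : Tendsto α atTop (nhds 0))
    (hbd : AIMBound P X xs q α)
    (hFbar : Tendsto (fun n : ℕ => (n : ℝ) * (1 - F (xs n))) atTop (nhds τ))
    (hppos : ∀ m, 1 ≤ p m)
    (hp : (fun n : ℕ => (p n : ℝ)) =o[atTop] (fun n : ℕ => (n : ℝ)))
    (hnα : (fun n : ℕ => (n : ℝ) * α n) =o[atTop] (fun n : ℕ => (p n : ℝ)))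
    (hqp : (fun n : ℕ => (q n : ℝ)) =o[atTop] (fun n : ℕ => (p n : ℝ))) :
    Tendsto (fun n =>
      pr P (allLe X (Set.Icc 1 n) (xs n)) -
        ∏ i ∈ Finset.Icc 1 (n / (p n + q n)),
          pr P (allLe X
            (Set.Icc ((i - 1) * (p n + q n) + 1) (i * p n + (i - 1) * q n)) (xs n)))
      atTop (nhds 0) := by
  have hF1le : ∀ n : ℕ, 0 ≤ 1 - F (xs n) := by
    intro n
    have h1 : F (xs n) = pr P {ω | X 1 ω ≤ xs n} := (hF 1 le_rfl (xs n)).symm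
    have h2 := pr_le_one P {ω | X 1 ω ≤ xs n}
    rw [h1]; linarith
  -- eventual regime: q n ≤ p n and p n + q n ≤ n (as naturals)
  have hev1 : ∀ᶠ n in atTop, q n ≤ p n := by
    filter_upwards [hqp.def one_pos] with n hn
    have : (q n : ℝ) ≤ p n := by
      simpa [Real.norm_eq_abs, Nat.abs_cast] using hn
    exact_mod_cast this
  have hev2 : ∀ᶠ n in atTop, p n + q n ≤ n := by
    filter_upwards [hp.def (by norm_num : (0:ℝ) < 1/2), hq.def (by norm_num : (0:ℝ) < 1/2)]
      with n h1 h2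
    have h1' : (p n : ℝ) ≤ 1/2 * n := by
      simpa [Real.norm_eq_abs, Nat.abs_cast] using h1
    have h2' : (q n : ℝ) ≤ 1/2 * n := by
      simpa [Real.norm_eq_abs, Nat.abs_cast] using h2
    have : (p n : ℝ) + q n ≤ n := by linarith
    exact_mod_cast this
  -- the dominating sequence
  set g : ℕ → ℝ := fun n =>
    ((p n : ℝ) + 2 * q n) * (1 - F (xs n)) + |(n : ℝ) * α n| / p n +
      ((n : ℝ) / p n) * ((q n : ℝ) * (1 - F (xs n))) with hg_def
  have hg : Tendsto g atTop (nhds 0) := by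
    have t1 : Tendsto (fun n : ℕ => ((p n : ℝ) + 2 * q n) * (1 - F (xs n))) atTop (nhds 0) := by
      have hlim : Tendsto (fun n : ℕ =>
          ((p n : ℝ) / n + 2 * ((q n : ℝ) / n)) * ((n : ℝ) * (1 - F (xs n)))) atTop
          (nhds ((0 + 2 * 0) * τ)) := by
        exact (Tendsto.add hp.tendsto_div_nhds_zero
          ((hq.tendsto_div_nhds_zero).const_mul 2)).mul hFbar
      rw [show ((0:ℝ) + 2 * 0) * τ = 0 by ring] at hlim
      refine hlim.congr' ?_
      filter_upwards [eventually_ge_atTop 1] with n hn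
      have hn0 : (n : ℝ) ≠ 0 := by positivity
      field_simp
    have t2 : Tendsto (fun n : ℕ => |(n : ℝ) * α n| / p n) atTop (nhds 0) := by
      have := hnα.tendsto_div_nhds_zero
      have h2 := (tendsto_zero_iff_abs_tendsto_zero _).1 this
      refine h2.congr fun n => ?_
      simp only [Function.comp_apply]
      rw [abs_div, abs_of_nonneg (by positivity : (0:ℝ) ≤ (p n : ℝ))]
    have t3 : Tendsto (fun n : ℕ => ((n : ℝ) / p n) * ((q n : ℝ) * (1 - F (xs n)))) atTop
        (nhds 0) := by
      have hlim : Tendsto (fun n : ℕ =>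
          ((q n : ℝ) / p n) * ((n : ℝ) * (1 - F (xs n)))) atTop (nhds (0 * τ)) :=
        hqp.tendsto_div_nhds_zero.mul hFbar
      rw [zero_mul] at hlim
      refine hlim.congr fun n => ?_
      ring
    have := (t1.add t2).add t3
    simpa [hg_def] using this
  rw [tendsto_zero_iff_abs_tendsto_zero]
  refine squeeze_zero' (Eventually.of_forall fun n => abs_nonneg _) ?_ hg
  filter_upwards [hev1, hev2, eventually_ge_atTop 1] with n hqpn hpqn hn1
  simp only [Function.comp_apply]
  have hb := keybound P X F xs q α p hmeas hF hbd n (hqpos n) (hppos n) hqpn hpqn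
  refine le_trans hb ?_
  set r := n / (p n + q n) with hr
  have hrp : r * p n ≤ n :=
    le_trans (Nat.mul_le_mul_left r (Nat.le_add_right _ _)) (Nat.div_mul_le_self n _)
  have hp0 : (0:ℝ) < p n := by exact_mod_cast hppos n
  have hrp' : (r : ℝ) * p n ≤ n := by exact_mod_cast hrp
  have hr_le : (r : ℝ) ≤ (n : ℝ) / p n := by rw [le_div_iff₀ hp0]; exact hrp'
  have hFb0 := hF1le n
  have e1 : ((p n + 2 * q n : ℕ) : ℝ) * (1 - F (xs n)) =
      ((p n : ℝ) + 2 * q n) * (1 - F (xs n)) := by push_cast; ring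
  have h2a : (r : ℝ) * |α n| ≤ ((n : ℝ) / p n) * |α n| :=
    mul_le_mul_of_nonneg_right hr_le (abs_nonneg _)
  have h2b : (r : ℝ) * ((q n : ℝ) * (1 - F (xs n)))
      ≤ ((n : ℝ) / p n) * ((q n : ℝ) * (1 - F (xs n))) :=
    mul_le_mul_of_nonneg_right hr_le (mul_nonneg (Nat.cast_nonneg _) hFb0)
  have h2c : ((n : ℝ) / p n) * |α n| = |(n : ℝ) * α n| / p n := by
    rw [abs_mul, abs_of_nonneg (Nat.cast_nonneg (α := ℝ) n)]
    ring
  have hsplit : (r : ℝ) * (|α n| + (q n : ℝ) * (1 - F (xs n)))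
      = (r : ℝ) * |α n| + (r : ℝ) * ((q n : ℝ) * (1 - F (xs n))) := by ring
  simp only [hg_def]
  rw [e1, hsplit]
  have := h2c ▸ h2a
  linarith
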